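/- Let Σ be a compact metric space and P : dom(P) ⊆ Σ → Σ a map. Suppose that for every ε > 0 there exist δ > 0 and N ∈ ℕ such that: for every point p ∈ Σ and every open set I containing p of diameter less than δ, for all n ≥ N and all x ∈ dom(P^{n-1}), one has (1/n) ∑_{k=0}^{n-1} χ_I(P^k(x)) < ε. Then any weak* accumulation point μ of a sequence of measures μ_j = (1/n_j) ∑_{k=0}^{n_j-1} δ_{P^k(x_{n_j})} (with n_j ≥ 1, n_j → ∞, and x_{n_j} ∈ dom(P^{n_j - 1})) is non-atomic, i.e., μ({p}) = 0 for every p ∈ Σ, provided each point p admits arbitrarily small open neighborhoods I_p with μ(∂I_p) = 0. -/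

import Mathlib

open MeasureTheory Filter Topology Set Function
open scoped Classical

/-- Non-atomicity of weak* limits of Birkhoff averages of Dirac measures, given that
orbits spend an arbitrarily small fraction of time in sufficiently small open sets,
provided every point admits arbitrarily small open neighborhoods with `μ`-null boundary. -/
theorem stmt3
    {X : Type*} [MetricSpace X] [CompactSpace X] [MeasurableSpace X] [BorelSpace X]
    (P : X → X) (dom : Set X)
    (hP : ∀ ε : ℝ, 0 < ε → ∃ δ : ℝ, 0 < δ ∧ ∃ N : ℕ, ∀ p : X, ∀ I : Set X,
      IsOpen I → p ∈ I → Metric.diam I < δ → ∀ n : ℕ, N ≤ n → ∀ x : X,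
        (∀ k, k < n - 1 → P^[k] x ∈ dom) →
        (((Finset.range n).filter (fun k => P^[k] x ∈ I)).card : ℝ) / (n : ℝ) < ε)
    (n : ℕ → ℕ) (x : ℕ → X) (hn : ∀ j, 1 ≤ n j) (hnt : Tendsto n atTop atTop)
    (hx : ∀ j, ∀ k, k < n j - 1 → P^[k] (x j) ∈ dom)
    (μ : Measure X) (hμ : IsProbabilityMeasure μ)
    (hconv : ∀ f : C(X, ℝ), Tendsto
      (fun j => (∑ k ∈ Finset.range (n j), f (P^[k] (x j))) / (n j : ℝ))
      atTop (𝓝 (∫ a, f a ∂μ)))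
    (hnbhd : ∀ p : X, ∀ r : ℝ, 0 < r → ∃ I : Set X,
      IsOpen I ∧ p ∈ I ∧ Metric.diam I < r ∧ μ (frontier I) = 0) :
    ∀ p : X, μ {p} = 0 := by
  intro p
  have hfin : μ {p} ≠ ⊤ := measure_ne_top μ _
  suffices h : ∀ ε : ℝ, 0 < ε → (μ {p}).toReal ≤ ε by
    have h0 : (μ {p}).toReal ≤ 0 := le_of_forall_pos_le_add (by simpa using h)
    have : (μ {p}).toReal = 0 := le_antisymm h0 ENNReal.toReal_nonneg
    rw [ENNReal.toReal_eq_zero_iff] at this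
    tauto
  intro ε hε
  obtain ⟨δ, hδ, N, hN⟩ := hP ε hε
  obtain ⟨I, hIo, hpI, hId, -⟩ := hnbhd p δ hδ
  obtain ⟨f, hf0, hf1, hf01⟩ := exists_continuous_zero_one_of_isCompact
    (IsClosed.isCompact (isClosed_compl_iff.2 hIo)) (isClosed_singleton (x := p))
    (disjoint_left.2 fun a ha hap => ha (by rwa [mem_singleton_iff.1 hap]))
  -- μ {p} ≤ ∫ f
  have hint : Integrable (fun a => f a) μ :=
    f.continuous.integrable_of_hasCompactSupport (HasCompactSupport.of_compactSpace f)
  have h1 : (μ {p}).toReal ≤ ∫ a, f a ∂μ := by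
    have := integral_mono (μ := μ)
      ((integrable_const (1 : ℝ)).indicator (measurableSet_singleton p)) hint
      (fun a => by
        by_cases ha : a = p
        · subst ha
          have := hf1 rfl
          simp only [Pi.one_apply] at this
          simp [Set.indicator_of_mem, this]
        · rw [Set.indicator_of_notMem (by simpa using ha)]
          exact (hf01 a).1)
    rw [integral_indicator_const (1 : ℝ) (measurableSet_singleton p)] at this
    simpa [Measure.real] using this
  -- ∫ f ≤ ε
  have h2 : ∫ a, f a ∂μ ≤ ε := by
    refine le_of_tendsto (hconv f) ?_
    filter_upwards [hnt.eventually_ge_atTop N] with j hj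
    have hnpos : (0 : ℝ) < (n j : ℝ) := by exact_mod_cast (hn j)
    have hsum : (∑ k ∈ Finset.range (n j), f (P^[k] (x j))) ≤
        (((Finset.range (n j)).filter (fun k => P^[k] (x j) ∈ I)).card : ℝ) := by
      have : (((Finset.range (n j)).filter (fun k => P^[k] (x j) ∈ I)).card : ℝ)
          = ∑ k ∈ Finset.range (n j), (if P^[k] (x j) ∈ I then (1:ℝ) else 0) := by
        rw [Finset.sum_boole]
      rw [this]
      refine Finset.sum_le_sum fun k _ => ?_
      by_cases hk : P^[k] (x j) ∈ I
      · simp only [if_pos hk]; exact (hf01 _).2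
      · rw [if_neg hk]
        have := hf0 hk
        simp only [Pi.zero_apply] at this
        exact le_of_eq this
    have hcard := hN p I hIo hpI hId (n j) hj (x j) (hx j)
    calc (∑ k ∈ Finset.range (n j), f (P^[k] (x j))) / (n j : ℝ)
        ≤ (((Finset.range (n j)).filter (fun k => P^[k] (x j) ∈ I)).card : ℝ) / (n j : ℝ) :=
          by gcongr
      _ ≤ ε := le_of_lt hcard
  linarith
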